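/- The language E = {a,b}* · {aⁿbⁿ | n > 0} over the alphabet {a,b} is not accepted by any history-deterministic Parikh automaton. -/

import Mathlib

open scoped BigOperators

/-- A set `C ⊆ ℕ^d` is linear if `C = {v₀ + Σᵢ cᵢ vᵢ | cᵢ ∈ ℕ}` for some vectors. -/
def IsLinear {d : ℕ} (C : Set (Fin d → ℕ)) : Prop :=
  ∃ (k : ℕ) (v₀ : Fin d → ℕ) (v : Fin k → Fin d → ℕ),
    C = {x | ∃ c : Fin k → ℕ, x = v₀ + ∑ i, c i • v i}

/-- A set is semilinear if it is a finite union of linear sets. -/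
def IsSemilinear {d : ℕ} (C : Set (Fin d → ℕ)) : Prop :=
  ∃ (m : ℕ) (Cs : Fin m → Set (Fin d → ℕ)),
    (∀ i, IsLinear (Cs i)) ∧ C = ⋃ i, Cs i

/-- A Parikh automaton over alphabet `A` of dimension `d`: an NFA whose transitions are
labeled by a letter and a vector in `ℕ^d`, together with a semilinear acceptance set `C`. -/
structure PA (A : Type) (d : ℕ) where
  n : ℕ
  init : Fin n
  final : Set (Fin n)
  trans : Set (Fin n × (A × (Fin d → ℕ)) × Fin n)
  transFin : trans.Finite
  C : Set (Fin d → ℕ)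
  hC : IsSemilinear C

namespace PA

variable {A : Type} {d : ℕ}

/-- The type of transitions of a Parikh automaton. -/
abbrev Tr (P : PA A d) := Fin P.n × (A × (Fin d → ℕ)) × Fin P.n

/-- The word processed by a run (its Σ-projection). -/
def word (P : PA A d) (ρ : List P.Tr) : List A := ρ.map (fun t => t.2.1.1)

/-- The extended Parikh image of a run: the sum of the vector labels. -/
def image (P : PA A d) (ρ : List P.Tr) : Fin d → ℕ := (ρ.map (fun t => t.2.1.2)).sum

/-- The last state of a run (the initial state for the empty run). -/
def lastState (P : PA A d) (ρ : List P.Tr) : Fin P.n :=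
  (ρ.getLast?).elim P.init (fun t => t.2.2)

/-- A run: a sequence of transitions of `P`, consecutively matching, starting in the
initial state. -/
def IsRun (P : PA A d) (ρ : List P.Tr) : Prop :=
  (∀ t ∈ ρ, t ∈ P.trans) ∧
  ρ.Chain' (fun t t' => t.2.2 = t'.1) ∧
  (∀ t, ρ.head? = some t → t.1 = P.init)

/-- An accepting run: a run ending in an accepting state whose extended Parikh image
lies in `C`. -/
def Accepting (P : PA A d) (ρ : List P.Tr) : Prop :=
  P.IsRun ρ ∧ P.lastState ρ ∈ P.final ∧ P.image ρ ∈ P.C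

/-- The language of a Parikh automaton. -/
def Lang (P : PA A d) : Set (List A) :=
  {w | ∃ ρ, P.Accepting ρ ∧ P.word ρ = w}

/-- Determinism: for every state and letter there is at most one outgoing transition. -/
def Deterministic (P : PA A d) : Prop :=
  ∀ (q : Fin P.n) (a : A),
    Set.Subsingleton {p : Fin P.n × (Fin d → ℕ) | (q, (a, p.2), p.1) ∈ P.trans}

/-- Iterating a resolver `r` (fed the history and the next letter) along a word;
`pre` is the prefix read so far. -/
def iterResAux (P : PA A d) (r : List A → A → P.Tr) : List A → List A → List P.Tr
  | _, [] => []
  | pre, a :: rest => r pre a :: P.iterResAux r (pre ++ [a]) rest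

/-- The run built by iterating the resolver `r` letter by letter along `w`. -/
def iterRes (P : PA A d) (r : List A → A → P.Tr) (w : List A) : List P.Tr :=
  P.iterResAux r [] w

/-- `r` is a resolver: for every accepted word `w`, iterating `r` along `w` yields an
accepting run processing `w`. -/
def IsResolver (P : PA A d) (r : List A → A → P.Tr) : Prop :=
  ∀ w ∈ P.Lang, P.Accepting (P.iterRes r w) ∧ P.word (P.iterRes r w) = w

/-- A Parikh automaton is history-deterministic if it has a resolver. -/
def HistoryDeterministic (P : PA A d) : Prop := ∃ r, P.IsResolver r

end PA

/-- The language `E = {a,b}* · {aⁿbⁿ | n > 0}`, with `a` encoded as `false` and `b` as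
`true`. -/
def ELang : Set (List Bool) :=
  {w | ∃ (u : List Bool) (n : ℕ), 0 < n ∧
    w = u ++ List.replicate n false ++ List.replicate n true}
namespace EAux

lemma takeWhile_append_all {α} (p : α → Bool) (l1 l2 : List α)
    (h : ∀ x ∈ l1, p x = true) :
    (l1 ++ l2).takeWhile p = l1 ++ l2.takeWhile p := by
  induction l1 with
  | nil => simp
  | cons a l ih =>
    rw [List.cons_append, List.takeWhile_cons_of_pos (h a (by simp)),
      ih (fun x hx => h x (by simp [hx])), List.cons_append]

lemma dropWhile_append_all {α} (p : α → Bool) (l1 l2 : List α)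
    (h : ∀ x ∈ l1, p x = true) :
    (l1 ++ l2).dropWhile p = l2.dropWhile p := by
  induction l1 with
  | nil => simp
  | cons a l ih =>
    rw [List.cons_append, List.dropWhile_cons_of_pos (h a (by simp))]
    exact ih (fun x hx => h x (by simp [hx]))

/-- number of trailing `true`s -/
def tb (y : List Bool) : ℕ := (y.reverse.takeWhile (fun b => b)).length

/-- number of trailing `false`s before the trailing `true`s -/
def ta (y : List Bool) : ℕ :=
  ((y.reverse.dropWhile (fun b => b)).takeWhile (fun b => !b)).length

lemma tb_append_true (Y : List Bool) (s : ℕ) :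
    tb (Y ++ List.replicate s true) = tb Y + s := by
  unfold tb
  rw [List.reverse_append, List.reverse_replicate,
    takeWhile_append_all _ _ _ (fun x hx => by rw [List.eq_of_mem_replicate hx]),
    List.length_append, List.length_replicate]
  omega

lemma tb_append_false (Y : List Bool) (k : ℕ) (hk : 0 < k) :
    tb (Y ++ List.replicate k false) = 0 := by
  obtain ⟨k', rfl⟩ : ∃ k', k = k' + 1 := ⟨k - 1, by omega⟩
  unfold tb
  rw [List.reverse_append, List.reverse_replicate, List.replicate_succ,
    List.cons_append, List.takeWhile_cons_of_neg (by simp)]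
  rfl

lemma ta_append_true (Y : List Bool) (s : ℕ) :
    ta (Y ++ List.replicate s true) = ta Y := by
  unfold ta
  rw [List.reverse_append, List.reverse_replicate,
    dropWhile_append_all _ _ _ (fun x hx => by rw [List.eq_of_mem_replicate hx])]

lemma ta_true_false (Z : List Bool) (k : ℕ) (hk : 0 < k) :
    ta (Z ++ [true] ++ List.replicate k false) = k := by
  obtain ⟨k', rfl⟩ : ∃ k', k = k' + 1 := ⟨k - 1, by omega⟩
  unfold ta
  rw [List.reverse_append, List.reverse_replicate, List.replicate_succ,
    List.cons_append, List.dropWhile_cons_of_neg (by simp), ← List.cons_append,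
    ← List.replicate_succ,
    takeWhile_append_all _ _ _ (fun x hx => by rw [List.eq_of_mem_replicate hx]; rfl),
    List.reverse_append]
  simp

lemma ta_append_false_ge (U : List Bool) (k : ℕ) (hk : 0 < k) :
    k ≤ ta (U ++ List.replicate k false) := by
  obtain ⟨k', rfl⟩ : ∃ k', k = k' + 1 := ⟨k - 1, by omega⟩
  unfold ta
  rw [List.reverse_append, List.reverse_replicate, List.replicate_succ,
    List.cons_append, List.dropWhile_cons_of_neg (by simp), ← List.cons_append,
    ← List.replicate_succ,
    takeWhile_append_all _ _ _ (fun x hx => by rw [List.eq_of_mem_replicate hx]; rfl),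
    List.length_append, List.length_replicate]
  omega

lemma mem_ELang_tb_le_ta {y : List Bool} (hy : y ∈ ELang) : tb y ≤ ta y := by
  obtain ⟨u, n, hn, rfl⟩ := hy
  rw [tb_append_true, ta_append_true, tb_append_false _ _ hn]
  simpa using ta_append_false_ge u n hn

end EAux

namespace PAProof

open PA

variable {A : Type} {d : ℕ}

/-- `Seg P q ρ q'`: `ρ` is a chain of transitions of `P` leading from state `q` to
state `q'`. -/
inductive Seg (P : PA A d) : Fin P.n → List P.Tr → Fin P.n → Prop
  | nil (q : Fin P.n) : Seg P q [] q
  | cons {q q' : Fin P.n} (t : P.Tr) (ρ : List P.Tr) (h1 : t.1 = q) (h2 : t ∈ P.trans)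
      (h3 : Seg P t.2.2 ρ q') : Seg P q (t :: ρ) q'

lemma seg_append {P : PA A d} {q q'' : Fin P.n} {ρ1 ρ2 : List P.Tr} :
    Seg P q (ρ1 ++ ρ2) q'' ↔ ∃ q', Seg P q ρ1 q' ∧ Seg P q' ρ2 q'' := by
  induction ρ1 generalizing q with
  | nil =>
    constructor
    · intro h; exact ⟨q, Seg.nil q, h⟩
    · rintro ⟨q', h1, h2⟩; cases h1; exact h2
  | cons t ρ1 ih =>
    constructor
    · intro h
      cases h with
      | cons _ _ h1 h2 h3 =>
        obtain ⟨q', s1, s2⟩ := ih.1 h3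
        exact ⟨q', Seg.cons t ρ1 h1 h2 s1, s2⟩
    · rintro ⟨q', h1, h2⟩
      cases h1 with
      | cons _ _ h1 h2' h3 =>
        exact Seg.cons t _ h1 h2' (ih.2 ⟨q', h3, h2⟩)

/-- end state of a chain starting at `q` -/
def chainEnd (P : PA A d) (q : Fin P.n) (ρ : List P.Tr) : Fin P.n :=
  (ρ.getLast?).elim q (fun t => t.2.2)

lemma chainEnd_cons (P : PA A d) (q : Fin P.n) (t : P.Tr) (ρ : List P.Tr) :
    chainEnd P q (t :: ρ) = chainEnd P t.2.2 ρ := by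
  cases ρ with
  | nil => rfl
  | cons h l =>
    unfold chainEnd
    rw [List.getLast?_cons_cons]
    cases e : (h :: l).getLast? with
    | none => simp at e
    | some y => rfl

lemma seg_chainEnd {P : PA A d} {q q' : Fin P.n} {ρ : List P.Tr} (h : Seg P q ρ q') :
    q' = chainEnd P q ρ := by
  induction h with
  | nil q => rfl
  | cons t ρ h1 h2 h3 ih => rw [chainEnd_cons]; exact ih

lemma lastState_eq_chainEnd (P : PA A d) (ρ : List P.Tr) :
    P.lastState ρ = chainEnd P P.init ρ := rfl

lemma chain_to_seg {P : PA A d} {ρ : List P.Tr} :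
    ∀ {q : Fin P.n}, (∀ t ∈ ρ, t ∈ P.trans) →
    ρ.Chain' (fun t t' => t.2.2 = t'.1) →
    (∀ t, ρ.head? = some t → t.1 = q) →
    Seg P q ρ (chainEnd P q ρ) := by
  induction ρ with
  | nil => intro q _ _ _; exact Seg.nil q
  | cons t ρ ih =>
    intro q hmem hchain hhead
    unfold List.Chain' at hchain
    rw [List.isChain_cons] at hchain
    rw [chainEnd_cons]
    refine Seg.cons t ρ (hhead t rfl) (hmem t (by simp)) ?_
    refine ih (fun t' ht' => hmem t' (by simp [ht'])) hchain.2 ?_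
    intro t' ht'
    exact (hchain.1 t' ht').symm

lemma run_to_seg {P : PA A d} {ρ : List P.Tr} (h : P.IsRun ρ) :
    Seg P P.init ρ (P.lastState ρ) := by
  obtain ⟨hmem, hchain, hhead⟩ := h
  rw [lastState_eq_chainEnd]
  exact chain_to_seg hmem hchain hhead

lemma seg_mem {P : PA A d} {q q' : Fin P.n} {ρ : List P.Tr} (h : Seg P q ρ q') :
    ∀ t ∈ ρ, t ∈ P.trans := by
  induction h with
  | nil => simp
  | cons t ρ h1 h2 h3 ih =>
    intro t' ht'
    rcases List.mem_cons.1 ht' with rfl | ht'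
    · exact h2
    · exact ih t' ht'

lemma seg_chain' {P : PA A d} {q q' : Fin P.n} {ρ : List P.Tr} (h : Seg P q ρ q') :
    ρ.Chain' (fun t t' => t.2.2 = t'.1) := by
  induction h with
  | nil => exact List.isChain_nil
  | cons t ρ h1 h2 h3 ih =>
    unfold List.Chain'
    rw [List.isChain_cons]
    refine ⟨?_, ih⟩
    intro t' ht'
    cases h3 with
    | nil => simp at ht'
    | cons t2 ρ2 g1 g2 g3 =>
      simp at ht'
      subst ht'
      exact g1.symm

lemma seg_head {P : PA A d} {q q' : Fin P.n} {ρ : List P.Tr} (h : Seg P q ρ q') :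
    ∀ t, ρ.head? = some t → t.1 = q := by
  cases h with
  | nil => simp
  | cons t2 ρ2 g1 g2 g3 =>
    intro t' ht'
    simp at ht'
    subst ht'
    exact g1

lemma seg_to_run {P : PA A d} {ρ : List P.Tr} {qf : Fin P.n}
    (h : Seg P P.init ρ qf) : P.IsRun ρ ∧ P.lastState ρ = qf := by
  exact ⟨⟨seg_mem h, seg_chain' h, seg_head h⟩,
    by rw [lastState_eq_chainEnd]; exact (seg_chainEnd h).symm⟩

end PAProof

namespace PAProof

variable {A : Type} {d : ℕ}

lemma iterResAux_append (P : PA A d) (r : List A → A → P.Tr) (w1 w2 pre : List A) :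
    P.iterResAux r pre (w1 ++ w2) =
      P.iterResAux r pre w1 ++ P.iterResAux r (pre ++ w1) w2 := by
  induction w1 generalizing pre with
  | nil => simp [PA.iterResAux]
  | cons a w1 ih =>
    rw [List.cons_append, PA.iterResAux, PA.iterResAux, List.cons_append, ih]
    simp [List.append_assoc]

lemma iterResAux_length (P : PA A d) (r : List A → A → P.Tr) (w pre : List A) :
    (P.iterResAux r pre w).length = w.length := by
  induction w generalizing pre with
  | nil => rfl
  | cons a w ih => rw [PA.iterResAux, List.length_cons, List.length_cons, ih]

lemma word_append (P : PA A d) (ρ1 ρ2 : List P.Tr) :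
    P.word (ρ1 ++ ρ2) = P.word ρ1 ++ P.word ρ2 := List.map_append

lemma word_length (P : PA A d) (ρ : List P.Tr) :
    (P.word ρ).length = ρ.length := List.length_map _

lemma image_append (P : PA A d) (ρ1 ρ2 : List P.Tr) :
    P.image (ρ1 ++ ρ2) = P.image ρ1 + P.image ρ2 := by
  unfold PA.image
  rw [List.map_append, List.sum_append]

/-- The key history-determinism surgery: if the resolver reaches the same state `q`
after `u`, `u++v`, `u++v++x` and `u++v++x++v`, then for every `z'`, acceptance of
`u++v++x++v++z'` implies acceptance of `u++v++v++x++z'`. -/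
lemma swap_mem (P : PA A d) (r : List A → A → P.Tr) (hr : P.IsResolver r)
    (u v x z' : List A) (q : Fin P.n)
    (h1 : P.lastState (P.iterRes r u) = q)
    (h2 : P.lastState (P.iterRes r (u ++ v)) = q)
    (h3 : P.lastState (P.iterRes r (u ++ v ++ x)) = q)
    (h4 : P.lastState (P.iterRes r (u ++ v ++ x ++ v)) = q)
    (hin : u ++ v ++ x ++ v ++ z' ∈ P.Lang) :
    u ++ v ++ v ++ x ++ z' ∈ P.Lang := by
  obtain ⟨⟨hrun, hfin, himg⟩, hword⟩ := hr _ hin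
  let A0 := P.iterRes r u
  let S1 := P.iterResAux r u v
  let S2 := P.iterResAux r (u ++ v) x
  let S3 := P.iterResAux r (u ++ v ++ x) v
  let S4 := P.iterResAux r (u ++ v ++ x ++ v) z'
  have hsplit2 : P.iterRes r (u ++ v) = A0 ++ S1 := by
    show P.iterResAux r [] (u ++ v) = A0 ++ S1
    rw [iterResAux_append, List.nil_append]
    rfl
  have hsplit3 : P.iterRes r (u ++ v ++ x) = A0 ++ S1 ++ S2 := by
    show P.iterResAux r [] ((u ++ v) ++ x) = (A0 ++ S1) ++ S2
    rw [iterResAux_append, List.nil_append]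
    exact congrArg (· ++ S2) hsplit2
  have hsplit4 : P.iterRes r (u ++ v ++ x ++ v) = A0 ++ S1 ++ S2 ++ S3 := by
    show P.iterResAux r [] ((u ++ v ++ x) ++ v) = (A0 ++ S1 ++ S2) ++ S3
    rw [iterResAux_append, List.nil_append]
    exact congrArg (· ++ S3) hsplit3
  have hsplit5 : P.iterRes r (u ++ v ++ x ++ v ++ z') = A0 ++ S1 ++ S2 ++ S3 ++ S4 := by
    show P.iterResAux r [] ((u ++ v ++ x ++ v) ++ z') = (A0 ++ S1 ++ S2 ++ S3) ++ S4
    rw [iterResAux_append, List.nil_append]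
    exact congrArg (· ++ S4) hsplit4
  rw [hsplit5] at hrun hfin himg hword
  have lenA0 : A0.length = u.length := iterResAux_length _ _ _ _
  have lenS1 : S1.length = v.length := iterResAux_length _ _ _ _
  have lenS2 : S2.length = x.length := iterResAux_length _ _ _ _
  have lenS3 : S3.length = v.length := iterResAux_length _ _ _ _
  rw [word_append, word_append, word_append, word_append] at hword
  obtain ⟨hwA, hword⟩ := List.append_inj
    (by simpa [List.append_assoc] using hword)
    (by rw [word_length]; exact lenA0)
  obtain ⟨hw1, hword⟩ := List.append_inj hword (by rw [word_length]; exact lenS1)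
  obtain ⟨hw2, hword⟩ := List.append_inj hword (by rw [word_length]; exact lenS2)
  obtain ⟨hw3, hw4⟩ := List.append_inj hword (by rw [word_length]; exact lenS3)
  have hseg := run_to_seg hrun
  set qf := P.lastState (A0 ++ S1 ++ S2 ++ S3 ++ S4) with hqf
  rw [show A0 ++ S1 ++ S2 ++ S3 ++ S4 = A0 ++ (S1 ++ (S2 ++ (S3 ++ S4))) by
    simp [List.append_assoc]] at hseg
  obtain ⟨q1, sgA, hseg⟩ := seg_append.1 hseg
  obtain ⟨q2, sg1, hseg⟩ := seg_append.1 hseg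
  obtain ⟨q3, sg2, hseg⟩ := seg_append.1 hseg
  obtain ⟨q4, sg3, sg4⟩ := seg_append.1 hseg
  have hq1 : q1 = q := by rw [seg_chainEnd sgA, ← lastState_eq_chainEnd]; exact h1
  rw [hq1] at sgA sg1
  have hq2 : q2 = q := by
    have hs : Seg P P.init (A0 ++ S1) q2 := seg_append.2 ⟨q, sgA, sg1⟩
    rw [seg_chainEnd hs, ← lastState_eq_chainEnd, ← hsplit2]; exact h2
  rw [hq2] at sg1 sg2
  have hq3 : q3 = q := by
    have hs : Seg P P.init ((A0 ++ S1) ++ S2) q3 :=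
      seg_append.2 ⟨q, seg_append.2 ⟨q, sgA, sg1⟩, sg2⟩
    rw [seg_chainEnd hs, ← lastState_eq_chainEnd, ← hsplit3]; exact h3
  rw [hq3] at sg2 sg3
  have hq4 : q4 = q := by
    have hs : Seg P P.init (((A0 ++ S1) ++ S2) ++ S3) q4 :=
      seg_append.2 ⟨q, seg_append.2 ⟨q, seg_append.2 ⟨q, sgA, sg1⟩, sg2⟩, sg3⟩
    rw [seg_chainEnd hs, ← lastState_eq_chainEnd, ← hsplit4]; exact h4
  rw [hq4] at sg3 sg4
  refine ⟨A0 ++ S1 ++ S3 ++ S2 ++ S4, ?_, ?_⟩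
  · have hseg' : Seg P P.init (A0 ++ (S1 ++ (S3 ++ (S2 ++ S4)))) qf :=
      seg_append.2 ⟨q, sgA, seg_append.2 ⟨q, sg1,
        seg_append.2 ⟨q, sg3, seg_append.2 ⟨q, sg2, sg4⟩⟩⟩⟩
    rw [show A0 ++ (S1 ++ (S3 ++ (S2 ++ S4))) = A0 ++ S1 ++ S3 ++ S2 ++ S4 by
      simp [List.append_assoc]] at hseg'
    obtain ⟨hrun', hlast'⟩ := seg_to_run hseg'
    refine ⟨hrun', by rw [hlast']; exact hfin, ?_⟩
    have himg' : P.image (A0 ++ S1 ++ S3 ++ S2 ++ S4) =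
        P.image (A0 ++ S1 ++ S2 ++ S3 ++ S4) := by
      rw [image_append, image_append, image_append, image_append,
        image_append, image_append, image_append, image_append]
      funext i
      simp only [Pi.add_apply]
      omega
    rw [himg']
    exact himg
  · rw [word_append, word_append, word_append, word_append, hwA, hw1, hw2, hw3, hw4]

end PAProof

namespace PAProof

/-- letter at position `k` of the periodic word `(aᵖbᵖ)^∞` -/
def gfun (p : ℕ) : ℕ → Bool := fun k => decide (p ≤ k % (2*p))

/-- the first `L` letters of the periodic word -/
def wbase (p L : ℕ) : List Bool := (List.range L).map (gfun p)

lemma gfun_false (p k : ℕ) (h : k % (2*p) < p) : gfun p k = false := by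
  simp only [gfun, decide_eq_false_iff_not, not_le]
  exact h

lemma gfun_true (p k : ℕ) (h : p ≤ k % (2*p)) : gfun p k = true := by
  simp only [gfun, decide_eq_true_eq]
  exact h

lemma wbase_length (p L : ℕ) : (wbase p L).length = L := by simp [wbase]

lemma wbase_take_succ (p L k : ℕ) (hk : k < L) :
    (wbase p L).take (k+1) = (wbase p L).take k ++ [gfun p k] := by
  rw [List.take_succ]
  congr 1
  simp [wbase, List.getElem?_map, List.getElem?_range hk]

lemma wbase_take_eq (p L a m : ℕ) (h : a + m ≤ L)
    (hfalse : ∀ i, i < m → gfun p (a+i) = false) :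
    (wbase p L).take (a+m) = (wbase p L).take a ++ List.replicate m false := by
  induction m with
  | zero => simp
  | succ m ih =>
    rw [show a + (m+1) = (a+m)+1 by omega, wbase_take_succ p L _ (by omega),
      ih (by omega) (fun i hi => hfalse i (by omega)), hfalse m (by omega),
      List.replicate_succ', ← List.append_assoc]

end PAProof

open PAProof EAux in
/-- `E` is not accepted by any history-deterministic Parikh automaton. -/
theorem ELang_not_hdpa :
    ¬ ∃ (d : ℕ) (P : PA Bool d), P.HistoryDeterministic ∧ P.Lang = ELang := by
  rintro ⟨d, P, ⟨r, hr⟩, hL⟩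
  have hn : 0 < P.n := Fin.pos P.init
  set Nw : ℕ := P.n*(P.n+2)*(P.n+2)+1 with hNw
  set L : ℕ := Nw * (4*(P.n+1)) with hLdef
  set w : List Bool := wbase (P.n+1) L with hw
  set f : ℕ → Fin P.n := fun k => P.lastState (P.iterRes r (w.take k)) with hf
  have hmod : ∀ (j c : ℕ), c < 2*(P.n+1) → (j*(4*(P.n+1)) + c) % (2*(P.n+1)) = c := by
    intro j c hc
    have h : j*(4*(P.n+1)) + c = (2*(P.n+1))*(2*j) + c := by ring
    rw [h, Nat.mul_add_mod, Nat.mod_eq_of_lt hc]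
  -- window pigeonhole: in each window two positions with equal resolver state
  have HW : ∀ j : ℕ, ∃ st : ℕ × ℕ, st.1 < st.2 ∧ st.2 ≤ P.n+1 ∧
      f (j*(4*(P.n+1)) + st.1) = f (j*(4*(P.n+1)) + st.2) := by
    intro j
    obtain ⟨k1, k2, hne, heq⟩ := Fintype.exists_ne_map_eq_of_card_lt
      (fun k : Fin (P.n+2) => f (j*(4*(P.n+1)) + k.val)) (by simp)
    have hnev : k1.val ≠ k2.val := fun hh => hne (Fin.ext hh)
    rcases Nat.lt_or_ge k1.val k2.val with h | h
    · exact ⟨(k1.val, k2.val), h, by have := k2.isLt; omega, heq⟩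
    · exact ⟨(k2.val, k1.val), by omega, by have := k1.isLt; omega, heq.symm⟩
  choose F hF1 hF2 hF3 using HW
  -- global pigeonhole over windows
  obtain ⟨j1, j2, hne, heq⟩ := Fintype.exists_ne_map_eq_of_card_lt
    (fun j : Fin Nw =>
      ((⟨(F j.val).1, by have := hF1 j.val; have := hF2 j.val; omega⟩ : Fin (P.n+2)),
       (⟨(F j.val).2, by have := hF2 j.val; omega⟩ : Fin (P.n+2)),
       f (j.val*(4*(P.n+1)) + (F j.val).1)))
    (by
      simp only [Fintype.card_prod, Fintype.card_fin]
      have h : (P.n+2)*((P.n+2)*P.n) = P.n*(P.n+2)*(P.n+2) := by ring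
      omega)
  simp only [Prod.mk.injEq, Fin.mk.injEq] at heq
  obtain ⟨e1, e2, e3⟩ := heq
  have hnev : j1.val ≠ j2.val := fun hh => hne (Fin.ext hh)
  -- the key argument, for ordered window indices
  have key : ∀ ja jb : ℕ, ja < jb → jb < Nw →
      (F ja).1 = (F jb).1 → (F ja).2 = (F jb).2 →
      f (ja*(4*(P.n+1)) + (F ja).1) = f (jb*(4*(P.n+1)) + (F jb).1) → False := by
    intro ja jb hjab hjbNw he1 he2 he3
    set s : ℕ := (F ja).1 with hs
    set t : ℕ := (F ja).2 with ht
    have hst : s < t := hF1 ja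
    have htn : t ≤ P.n+1 := hF2 ja
    set X : ℕ := ja*(4*(P.n+1)) with hX
    set Y : ℕ := jb*(4*(P.n+1)) with hY
    have hfj : f (X + s) = f (X + t) := hF3 ja
    have hfj' : f (Y + s) = f (Y + t) := by
      have h := hF3 jb
      rw [← he1, ← he2] at h
      exact h
    have hcross : f (X + s) = f (Y + s) := by
      rw [← he1] at he3
      exact he3
    -- index arithmetic
    have hXY : X + 4*(P.n+1) ≤ Y := by
      have h1 : (ja+1)*(4*(P.n+1)) ≤ jb*(4*(P.n+1)) :=
        Nat.mul_le_mul_right _ (by omega)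
      have h2 : (ja+1)*(4*(P.n+1)) = X + 4*(P.n+1) := by rw [hX]; ring
      omega
    have hYL : Y + 4*(P.n+1) ≤ L := by
      have h1 : (jb+1)*(4*(P.n+1)) ≤ Nw*(4*(P.n+1)) :=
        Nat.mul_le_mul_right _ (by omega)
      have h2 : (jb+1)*(4*(P.n+1)) = Y + 4*(P.n+1) := by rw [hY]; ring
      omega
    have hY0 : 4*(P.n+1) ≤ Y := by
      have h1 : 1*(4*(P.n+1)) ≤ jb*(4*(P.n+1)) :=
        Nat.mul_le_mul_right _ (by omega)
      omega
    -- content lemmas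
    have hgfa : ∀ i, i < t - s → gfun (P.n+1) ((X + s) + i) = false := by
      intro i hi
      have h : (X + s) + i = ja*(4*(P.n+1)) + (s+i) := by rw [hX]; ring
      rw [h]
      exact gfun_false _ _ (by rw [hmod ja (s+i) (by omega)]; omega)
    have hgfb : ∀ i, i < t - s → gfun (P.n+1) ((Y + s) + i) = false := by
      intro i hi
      have h : (Y + s) + i = jb*(4*(P.n+1)) + (s+i) := by rw [hY]; ring
      rw [h]
      exact gfun_false _ _ (by rw [hmod jb (s+i) (by omega)]; omega)
    have hgfc : ∀ i, i < t → gfun (P.n+1) (Y + i) = false := by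
      intro i hi
      have h : Y + i = jb*(4*(P.n+1)) + i := by rw [hY]
      rw [h]
      exact gfun_false _ _ (by rw [hmod jb i (by omega)]; omega)
    have C1 : w.take (X + t) = w.take (X + s) ++ List.replicate (t-s) false := by
      rw [show X + t = (X + s) + (t - s) by omega, hw]
      exact wbase_take_eq _ _ _ _ (by omega) hgfa
    have C3 : w.take (Y + t) = w.take (Y + s) ++ List.replicate (t-s) false := by
      rw [show Y + t = (Y + s) + (t - s) by omega, hw]
      exact wbase_take_eq _ _ _ _ (by omega) hgfb
    have C5 : w.take (Y + t) = w.take Y ++ List.replicate t false := by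
      rw [show Y + t = Y + t by rfl, hw]
      exact wbase_take_eq _ _ _ _ (by omega) hgfc
    have C4a : w.take (Y + s) = w.take Y ++ List.replicate s false := by
      rw [hw]
      exact wbase_take_eq _ _ _ _ (by omega) (fun i hi => hgfc i (by omega))
    have C4b : w.take Y = w.take (Y - 1) ++ [true] := by
      obtain ⟨jc, hjc⟩ : ∃ jc, jb = jc+1 := ⟨jb-1, by omega⟩
      have hYr : Y = (2*(P.n+1))*(2*jc+1) + 2*(P.n+1) := by rw [hY, hjc]; ring
      have hgt : gfun (P.n+1) (Y - 1) = true := by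
        apply gfun_true
        rw [show Y - 1 = (2*(P.n+1))*(2*jc+1) + (2*(P.n+1)-1) by omega,
          Nat.mul_add_mod, Nat.mod_eq_of_lt (by omega)]
        omega
      have hsucc := wbase_take_succ (P.n+1) L (Y-1) (by omega)
      rw [show (Y-1)+1 = Y by omega, hgt] at hsucc
      rw [hw]
      exact hsucc
    -- the pieces
    set u : List Bool := w.take (X + s) with hu
    set v : List Bool := List.replicate (t-s) false with hv
    set x : List Bool := (w.take (Y + s)).drop (X + t) with hx
    set x₁ : List Bool := (w.take (Y - 1)).drop (X + t) with hx₁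
    have huv : u ++ v = w.take (X + t) := C1.symm
    have htk : (w.take (Y + s)).take (X + t) = w.take (X + t) := by
      rw [List.take_take, inf_eq_left.mpr (by omega)]
    have huvx : (u ++ v) ++ x = w.take (Y + s) := by
      rw [huv, hx, ← htk]
      exact List.take_append_drop _ _
    have huvxv : ((u ++ v) ++ x) ++ v = w.take (Y + t) := by
      rw [huvx, hv]
      exact C3.symm
    have hwlen : w.length = L := by rw [hw]; exact wbase_length _ _
    have hlen1 : (w.take (Y-1)).length = Y-1 := by
      rw [List.length_take, hwlen]
      omega
    have hxsplit : x = (x₁ ++ [true]) ++ List.replicate s false := by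
      rw [hx, C4a, C4b, List.drop_append,
        List.drop_append, hlen1, List.length_append, hlen1,
        List.length_singleton,
        show (X+t) - (Y-1) = 0 by omega, show X + t - (Y-1+1) = 0 by omega,
        List.drop_zero, List.drop_zero, ← hx₁]
    -- membership of the original word
    have hinE : u ++ v ++ x ++ v ++ (false :: List.replicate (t+1) true) ∈ P.Lang := by
      rw [hL]
      refine ⟨w.take Y, t+1, by omega, ?_⟩
      calc u ++ v ++ x ++ v ++ (false :: List.replicate (t+1) true)
          = (w.take (Y + t)) ++ (false :: List.replicate (t+1) true) := by
            rw [huvxv]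
        _ = (w.take Y ++ List.replicate t false) ++ (false :: List.replicate (t+1) true) := by
            rw [C5]
        _ = w.take Y ++ List.replicate (t+1) false ++ List.replicate (t+1) true := by
            simp [List.replicate_succ', List.append_assoc]
    -- state equalities for the surgery
    have h1' : P.lastState (P.iterRes r u) = f (X + s) := rfl
    have h2' : P.lastState (P.iterRes r (u ++ v)) = f (X + s) := by
      rw [huv, hfj]
    have h3' : P.lastState (P.iterRes r (u ++ v ++ x)) = f (X + s) := by
      rw [huvx, hcross]
    have h4' : P.lastState (P.iterRes r (u ++ v ++ x ++ v)) = f (X + s) := by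
      rw [huvxv, hcross, hfj']
    -- the surgery
    have hswap := swap_mem P r hr u v x (false :: List.replicate (t+1) true)
      (f (X+s)) h1' h2' h3' h4' hinE
    rw [hL] at hswap
    -- derive the contradiction
    have heqW : u ++ v ++ v ++ x ++ (false :: List.replicate (t+1) true) =
        (((((u ++ v) ++ v) ++ x₁) ++ [true]) ++ List.replicate (s+1) false)
          ++ List.replicate (t+1) true := by
      rw [hxsplit]
      simp [List.replicate_succ', List.append_assoc]
    rw [heqW] at hswap
    have hle := mem_ELang_tb_le_ta hswap
    rw [tb_append_true, ta_append_true, tb_append_false _ _ (by omega),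
      ta_true_false _ _ (by omega)] at hle
    omega
  rcases Nat.lt_or_ge j1.val j2.val with h | h
  · exact key j1.val j2.val h j2.isLt e1 e2 e3
  · exact key j2.val j1.val (by omega) j1.isLt e1.symm e2.symm e3.symm
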